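/- Let g ≥ 0 be an integer. Let N be the free ℤ-module with basis {ε, f₁, f₂} equipped with the symmetric bilinear form determined by ⟨ε, ε⟩ = 2g − 2, ⟨f₁, f₁⟩ = ⟨f₂, f₂⟩ = 0, ⟨f₁, f₂⟩ = 1, and ⟨ε, f₁⟩ = ⟨ε, f₂⟩ = 0. Then the characteristic polynomial of the composite ψ_{f₁,ε} ∘ s_{f₁−f₂} equals t³ + (g−2)t² + (g−2)t + 1, i.e., det(t·id − ψ_{f₁,ε} ∘ s_{f₁−f₂}) = 1 + (g−2)t + (g−2)t² + t³ in ℤ[t]. -/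

import Mathlib

open Polynomial

/-- The Eichler–Siegel transformation `ψ_{f,w}` associated to a bilinear form `B` on a
`ℤ`-module `N` and vectors `f, w ∈ N`, where `h` denotes the half `½⟨w,w⟩` of the (even)
squared length of `w`:  `ψ_{f,w}(x) = x + ⟨x,f⟩w − ⟨x,w⟩f − ½⟨w,w⟩⟨x,f⟩f`. -/
noncomputable def eichlerSiegel {N : Type*} [AddCommGroup N] [Module ℤ N]
    (B : LinearMap.BilinForm ℤ N) (f w : N) (h : ℤ) : Module.End ℤ N :=
  LinearMap.id + (LinearMap.toSpanSingleton ℤ N w) ∘ₗ (B.flip f)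
    - (LinearMap.toSpanSingleton ℤ N f) ∘ₗ (B.flip w)
    - h • ((LinearMap.toSpanSingleton ℤ N f) ∘ₗ (B.flip f))

/-- The reflection `s_δ(x) = x + ⟨x,δ⟩δ` in a vector `δ` with `⟨δ,δ⟩ = −2`. -/
noncomputable def reflNeg2 {N : Type*} [AddCommGroup N] [Module ℤ N]
    (B : LinearMap.BilinForm ℤ N) (δ : N) : Module.End ℤ N :=
  LinearMap.id + (LinearMap.toSpanSingleton ℤ N δ) ∘ₗ (B.flip δ)

/-- on the free `ℤ`-module with basis `{ε, f₁, f₂}` (here `ε = b 0`,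
`f₁ = b 1`, `f₂ = b 2`) and the symmetric bilinear form with `⟨ε,ε⟩ = 2g−2`,
`⟨f₁,f₁⟩ = ⟨f₂,f₂⟩ = 0`, `⟨f₁,f₂⟩ = 1`, `⟨ε,f₁⟩ = ⟨ε,f₂⟩ = 0`, the characteristic
polynomial of `ψ_{f₁,ε} ∘ s_{f₁−f₂}` is `1 + (g−2)t + (g−2)t² + t³`.
(The half-square parameter of `ψ_{f₁,ε}` is `½⟨ε,ε⟩ = g−1`.) -/
theorem charpoly_eichlerSiegel_mul_refl
    (g : ℕ) {N : Type*} [AddCommGroup N] [Module ℤ N]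
    [Module.Free ℤ N] [Module.Finite ℤ N]
    (b : Module.Basis (Fin 3) ℤ N) (B : LinearMap.BilinForm ℤ N)
    (hεε : B (b 0) (b 0) = 2 * (g : ℤ) - 2)
    (hf₁f₁ : B (b 1) (b 1) = 0) (hf₂f₂ : B (b 2) (b 2) = 0)
    (hf₁f₂ : B (b 1) (b 2) = 1) (hf₂f₁ : B (b 2) (b 1) = 1)
    (hεf₁ : B (b 0) (b 1) = 0) (hf₁ε : B (b 1) (b 0) = 0)
    (hεf₂ : B (b 0) (b 2) = 0) (hf₂ε : B (b 2) (b 0) = 0) :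
    LinearMap.charpoly
        (eichlerSiegel B (b 1) (b 0) ((g : ℤ) - 1) * reflNeg2 B (b 1 - b 2)) =
      1 + C ((g : ℤ) - 2) * X + C ((g : ℤ) - 2) * X ^ 2 + X ^ 3 := by

  set T := eichlerSiegel B (b 1) (b 0) ((g : ℤ) - 1) * reflNeg2 B (b 1 - b 2) with hT
  have hM : LinearMap.toMatrix b b T =
      !![1, 1, 0; -(2 * (g:ℤ) - 2), -((g:ℤ) - 1), 1; 0, 1, 0] := by
    ext i j
    fin_cases i <;> fin_cases j <;>
      simp [LinearMap.toMatrix_apply, hT, eichlerSiegel, reflNeg2, Module.End.mul_apply,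
        LinearMap.toSpanSingleton_apply, map_sub, map_add, hεε, hεf₁, hεf₂, hf₁ε, hf₂ε,
        hf₁f₁, hf₂f₂, hf₁f₂, hf₂f₁, Module.Basis.repr_self, Finsupp.single_apply,
        Finsupp.sub_apply, Finsupp.smul_apply] <;> ring
  rw [← LinearMap.charpoly_toMatrix T b, hM, Matrix.charpoly,
    Matrix.det_fin_three]
  simp [Matrix.charmatrix, Matrix.diagonal]
  ring
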